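/- Let X be a finite set, F a family of subsets of X, and M a positive integer with M > 2·C(|F|,2). If weights are assigned to elements of X independently and uniformly at random from {1,...,M}, then with probability greater than 1/2 all sets in F have pairwise distinct total weights. In particular M = 2|F|² suffices. -/

import Mathlib

open Finset

/-- If `x ∈ S₁ \ S₂`, the set of weight functions making the two sums equal has
small cardinality: multiplied by `M` it is at most the total count. -/
private lemma sep_pair_aux {α : Type*} [Fintype α] [DecidableEq α] {M : ℕ}
    (S₁ S₂ : Finset α) {x : α} (hx₁ : x ∈ S₁) (hx₂ : x ∉ S₂) :
    ((Fintype.piFinset fun _ : α => Finset.Icc 1 M).filter fun w =>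
        ∑ y ∈ S₁, w y = ∑ y ∈ S₂, w y).card * M ≤
      (Fintype.piFinset fun _ : α => Finset.Icc 1 M).card := by
  classical
  set Ω := Fintype.piFinset fun _ : α => Finset.Icc 1 M with hΩ
  have key : (((Ω.filter fun w => ∑ y ∈ S₁, w y = ∑ y ∈ S₂, w y) ×ˢ
      Finset.Icc 1 M)).card ≤ Ω.card := by
    apply Finset.card_le_card_of_injOn (fun p => Function.update p.1 x p.2)
    · rintro ⟨w, v⟩ hp
      simp only [Finset.mem_product, Finset.mem_filter, hΩ, Finset.mem_coe,
        Fintype.mem_piFinset] at hp ⊢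
      intro y
      by_cases hy : y = x
      · subst hy; simpa using hp.2
      · rw [Function.update_of_ne hy]; exact hp.1.1 y
    · rintro ⟨w, v⟩ hp ⟨w', v'⟩ hp' h
      simp only [Finset.mem_product, Finset.mem_filter, Finset.mem_coe] at hp hp'
      have hv : v = v' := by
        have := congrFun h x; simpa using this
      have hoff : ∀ y, y ≠ x → w y = w' y := by
        intro y hy
        have := congrFun h y
        simpa [Function.update_of_ne hy] using this
      have hwx : w x = w' x := by
        have h1 : w x + ∑ y ∈ S₁.erase x, w y = ∑ y ∈ S₂, w y := by
          rw [Finset.add_sum_erase _ _ hx₁]; exact hp.1.2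
        have h1' : w' x + ∑ y ∈ S₁.erase x, w' y = ∑ y ∈ S₂, w' y := by
          rw [Finset.add_sum_erase _ _ hx₁]; exact hp'.1.2
        have e1 : ∑ y ∈ S₁.erase x, w y = ∑ y ∈ S₁.erase x, w' y :=
          Finset.sum_congr rfl fun y hy => hoff y (Finset.ne_of_mem_erase hy)
        have e2 : ∑ y ∈ S₂, w y = ∑ y ∈ S₂, w' y :=
          Finset.sum_congr rfl fun y hy => hoff y (fun h => hx₂ (h ▸ hy))
        omega
      have hw : w = w' := funext fun y => by
        by_cases hy : y = x
        · subst hy; exact hwx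
        · exact hoff y hy
      simp [hw, hv]
  simpa [Finset.card_product, Nat.card_Icc] using key

private lemma sep_pair {α : Type*} [Fintype α] [DecidableEq α] {M : ℕ}
    {S₁ S₂ : Finset α} (hne : S₁ ≠ S₂) :
    ((Fintype.piFinset fun _ : α => Finset.Icc 1 M).filter fun w =>
        ∑ y ∈ S₁, w y = ∑ y ∈ S₂, w y).card * M ≤
      (Fintype.piFinset fun _ : α => Finset.Icc 1 M).card := by
  by_cases hsub : S₁ ⊆ S₂
  · obtain ⟨x, hx₂, hx₁⟩ := Finset.not_subset.mp
      (fun h => hne (Finset.Subset.antisymm hsub h))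
    have := sep_pair_aux (M := M) S₂ S₁ hx₂ hx₁
    simpa [eq_comm] using this
  · obtain ⟨x, hx₁, hx₂⟩ := Finset.not_subset.mp hsub
    exact sep_pair_aux S₁ S₂ hx₁ hx₂

/-- Quantitative randomized Separation Lemma: if `M > 2·C(|F|,2)`, then with
probability greater than `1/2` (over uniform random weight functions
`α → {1,...,M}`) all sets in `F` have pairwise distinct total weights. -/
theorem randomized_separation_half {α : Type*} [Fintype α] [DecidableEq α]
    (F : Finset (Finset α)) (M : ℕ) (hM : 2 * F.card.choose 2 < M) :
    (1 : ℝ) / 2 <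
      (((Fintype.piFinset fun _ : α => Finset.Icc 1 M).filter fun w =>
          ∀ S₁ ∈ F, ∀ S₂ ∈ F, S₁ ≠ S₂ →
            ∑ x ∈ S₁, w x ≠ ∑ x ∈ S₂, w x).card : ℝ) /
        ((Fintype.piFinset fun _ : α => Finset.Icc 1 M).card : ℝ) := by
  classical
  set Ω := Fintype.piFinset fun _ : α => Finset.Icc 1 M with hΩ
  have hM1 : 1 ≤ M := by omega
  have hN : 0 < Ω.card := by
    rw [hΩ, Fintype.card_piFinset]
    exact Finset.prod_pos fun i _ => by simp [Nat.card_Icc]; omega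
  set good := Ω.filter fun w => ∀ S₁ ∈ F, ∀ S₂ ∈ F, S₁ ≠ S₂ →
      ∑ x ∈ S₁, w x ≠ ∑ x ∈ S₂, w x with hgood
  set bad := Ω.filter fun w => ¬ ∀ S₁ ∈ F, ∀ S₂ ∈ F, S₁ ≠ S₂ →
      ∑ x ∈ S₁, w x ≠ ∑ x ∈ S₂, w x with hbad
  have hsplit : good.card + bad.card = Ω.card := Finset.card_filter_add_card_filter_not _
  -- union bound
  have hsubset : bad ⊆ (F.powersetCard 2).biUnion fun T =>
      Ω.filter fun w => ∃ S₁ ∈ T, ∃ S₂ ∈ T, S₁ ≠ S₂ ∧ ∑ x ∈ S₁, w x = ∑ x ∈ S₂, w x := by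
    intro w hw
    rw [hbad, Finset.mem_filter] at hw
    obtain ⟨hwΩ, hw⟩ := hw
    push_neg at hw
    obtain ⟨S₁, hS₁, S₂, hS₂, hne, heq⟩ := hw
    refine Finset.mem_biUnion.mpr ⟨{S₁, S₂}, ?_, ?_⟩
    · rw [Finset.mem_powersetCard]
      exact ⟨Finset.insert_subset hS₁ (Finset.singleton_subset_iff.mpr hS₂),
        Finset.card_pair hne⟩
    · exact Finset.mem_filter.mpr ⟨hwΩ, S₁, by simp, S₂, by simp, hne, heq⟩
  have hT : ∀ T ∈ F.powersetCard 2,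
      (Ω.filter fun w => ∃ S₁ ∈ T, ∃ S₂ ∈ T, S₁ ≠ S₂ ∧
        ∑ x ∈ S₁, w x = ∑ x ∈ S₂, w x).card * M ≤ Ω.card := by
    intro T hTmem
    obtain ⟨S₁, S₂, hne, rfl⟩ :=
      Finset.card_eq_two.mp (Finset.mem_powersetCard.mp hTmem).2
    have hsub : (Ω.filter fun w => ∃ A ∈ ({S₁, S₂} : Finset (Finset α)),
        ∃ B ∈ ({S₁, S₂} : Finset (Finset α)), A ≠ B ∧ ∑ x ∈ A, w x = ∑ x ∈ B, w x)
        ⊆ Ω.filter fun w => ∑ y ∈ S₁, w y = ∑ y ∈ S₂, w y := by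
      intro w hw
      rw [Finset.mem_filter] at hw ⊢
      obtain ⟨hwΩ, A, hA, B, hB, hAB, hsum⟩ := hw
      refine ⟨hwΩ, ?_⟩
      simp only [Finset.mem_insert, Finset.mem_singleton] at hA hB
      rcases hA with rfl | rfl <;> rcases hB with rfl | rfl <;>
        first | exact hsum | exact hsum.symm | exact absurd rfl hAB
    calc _ ≤ (Ω.filter fun w => ∑ y ∈ S₁, w y = ∑ y ∈ S₂, w y).card * M :=
          Nat.mul_le_mul_right _ (Finset.card_le_card hsub)
      _ ≤ Ω.card := sep_pair hne
  have hbadcard : bad.card * M ≤ F.card.choose 2 * Ω.card := by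
    calc bad.card * M ≤ (((F.powersetCard 2).biUnion fun T =>
          Ω.filter fun w => ∃ S₁ ∈ T, ∃ S₂ ∈ T, S₁ ≠ S₂ ∧
            ∑ x ∈ S₁, w x = ∑ x ∈ S₂, w x).card) * M :=
          Nat.mul_le_mul_right _ (Finset.card_le_card hsubset)
      _ ≤ (∑ T ∈ F.powersetCard 2, (Ω.filter fun w => ∃ S₁ ∈ T, ∃ S₂ ∈ T, S₁ ≠ S₂ ∧
            ∑ x ∈ S₁, w x = ∑ x ∈ S₂, w x).card) * M :=
          Nat.mul_le_mul_right _ (Finset.card_biUnion_le)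
      _ = ∑ T ∈ F.powersetCard 2, (Ω.filter fun w => ∃ S₁ ∈ T, ∃ S₂ ∈ T, S₁ ≠ S₂ ∧
            ∑ x ∈ S₁, w x = ∑ x ∈ S₂, w x).card * M := Finset.sum_mul _ _ _
      _ ≤ ∑ _T ∈ F.powersetCard 2, Ω.card := Finset.sum_le_sum hT
      _ = F.card.choose 2 * Ω.card := by
          rw [Finset.sum_const, Finset.card_powersetCard, smul_eq_mul]
  -- conclude `2 * bad.card < Ω.card`
  have h2bad : 2 * bad.card < Ω.card := by
    have h1 : 2 * (bad.card * M) ≤ 2 * F.card.choose 2 * Ω.card := by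
      rw [mul_assoc]; exact Nat.mul_le_mul_left 2 hbadcard
    have h2 : 2 * F.card.choose 2 * Ω.card < M * Ω.card :=
      (Nat.mul_lt_mul_right hN).mpr hM
    have h3 : 2 * bad.card * M < M * Ω.card := by
      calc 2 * bad.card * M = 2 * (bad.card * M) := by ring
        _ ≤ 2 * F.card.choose 2 * Ω.card := h1
        _ < M * Ω.card := h2
    have := Nat.lt_of_mul_lt_mul_right (a := M) (by
      calc 2 * bad.card * M < M * Ω.card := h3
        _ = Ω.card * M := Nat.mul_comm ..)
    exact this
  have hgoodcard : Ω.card < 2 * good.card := by omega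
  rw [div_lt_div_iff₀ (by norm_num) (by exact_mod_cast hN)]
  calc (1 : ℝ) * Ω.card = Ω.card := one_mul _
    _ < 2 * good.card := by exact_mod_cast hgoodcard
    _ = good.card * 2 := by ring
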